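/- arXiv:1110.1826 — 9 statements merged into one kernel-verified Lean document; each statement's English description precedes it below -/
import Mathlib

section
/- Let A and B be two disjoint bases of a matroid M. For every a ∈ A there exists b ∈ B such that both (A - a) + b and (B - b) + a are bases of M. -/
open Set

/-- A circuit of a matroid: a minimal dependent set. -/
def IsCircuitOf {α : Type*} (M : Matroid α) (C : Set α) : Prop :=
  M.Dep C ∧ ∀ D, D ⊂ C → ¬ M.Dep D

/-- The support `C(I,x)` of `x` in `I`: the set of elements of `I` lying in a circuit
contained in `insert x I` and containing `x` (for a base `I` and `x ∉ I` with `insert x I`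
dependent this is the fundamental circuit of `x` with respect to `I`, minus `x`). -/
def suppOf {α : Type*} (M : Matroid α) (I : Set α) (x : α) : Set α :=
  {y ∈ I | ∃ C ⊆ insert x I, IsCircuitOf M C ∧ x ∈ C ∧ y ∈ C}

/-- If `X` is a base, `x ∈ X` and `y ∉ closure (X \ {x})` with `y ∈ M.E`, then
`insert y (X \ {x})` is a base. -/
lemma base_insert_of_not_mem_closure {α : Type*} {M : Matroid α} {X : Set α} {x y : α}
    (hX : M.IsBase X) (hx : x ∈ X) (hyE : y ∈ M.E) (hyX : y ∉ X \ {x})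
    (hy : y ∉ M.closure (X \ {x})) : M.IsBase (insert y (X \ {x})) := by
  have hind : M.Indep (insert y (X \ {x})) := by
    rw [(hX.indep.diff {x}).insert_indep_iff_of_notMem hyX]
    exact ⟨hyE, hy⟩
  refine hind.isBase_of_ground_subset_closure ?_
  have hxcl : x ∈ M.closure (insert y (X \ {x})) := by
    have h1 : y ∈ M.closure (insert x (X \ {x})) \ M.closure (X \ {x}) := by
      rw [insert_diff_singleton, insert_eq_of_mem hx, hX.closure_eq]
      exact ⟨hyE, hy⟩
    exact (Matroid.closure_exchange h1).1
  have hXsub : X ⊆ M.closure (insert y (X \ {x})) := by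
    intro z hz
    rcases eq_or_ne z x with rfl | hzx
    · exact hxcl
    · exact M.subset_closure _ (insert_subset hyE ((diff_subset.trans hX.subset_ground)))
        (mem_insert_of_mem _ ⟨hz, hzx⟩)
  calc M.E = M.closure X := hX.closure_eq.symm
    _ ⊆ M.closure (insert y (X \ {x})) :=
        M.closure_subset_closure_of_subset_closure hXsub

theorem single_symmetric_exchange {α : Type*} (M : Matroid α) (A B : Set α)
    (hA : M.IsBase A) (hB : M.IsBase B) (hAB : Disjoint A B) :
    ∀ a ∈ A, ∃ b ∈ B,
      M.IsBase (insert b (A \ {a})) ∧ M.IsBase (insert a (B \ {b})) := by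
  intro a ha
  have haE : a ∈ M.E := hA.subset_ground ha
  set D : Set α := {b ∈ B | a ∉ M.closure (B \ {b})} with hDdef
  have hDB : D ⊆ B := fun b hb => hb.1
  -- a is in the closure of D
  have hacl : a ∈ M.closure D := by
    rcases eq_or_ne (B \ D) ∅ with hBD | hBD
    · have : B ⊆ D := diff_eq_empty.mp hBD
      have : D = B := subset_antisymm hDB this
      rw [this, hB.closure_eq]; exact haE
    · have hne : (B \ D).Nonempty := nonempty_iff_ne_empty.mpr hBD
      have hU : M.Indep (⋃ b ∈ B \ D, (B \ {b})) := by
        refine hB.indep.subset ?_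
        simp only [iUnion_subset_iff]
        exact fun i _ => diff_subset
      have hkey := M.closure_biInter_eq_biInter_closure_of_biUnion_indep hne
        (I := fun b => B \ {b}) hU
      have hint : (⋂ b ∈ B \ D, (B \ {b})) = D := by
        apply subset_antisymm
        · intro x hx
          simp only [mem_iInter] at hx
          obtain ⟨b0, hb0⟩ := hne
          have hxB : x ∈ B := (hx b0 hb0).1
          by_contra hxD
          have : x ∈ B \ D := ⟨hxB, hxD⟩
          exact (hx x this).2 rfl
        · intro x hx
          simp only [mem_iInter]
          intro b hb
          refine ⟨hDB hx, ?_⟩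
          rintro rfl
          exact hb.2 hx
      rw [hint] at hkey
      rw [hkey]
      simp only [mem_iInter]
      intro b hb
      by_contra h
      exact hb.2 ⟨hb.1, h⟩
  -- find b ∈ D not in the closure of A \ {a}
  have hnotall : ¬ D ⊆ M.closure (A \ {a}) := by
    intro hsub
    have : M.closure D ⊆ M.closure (A \ {a}) :=
      M.closure_subset_closure_of_subset_closure hsub
    exact hA.indep.notMem_closure_diff_of_mem ha (this hacl)
  obtain ⟨b, hbD, hbH⟩ := not_subset.mp hnotall
  have hbB : b ∈ B := hDB hbD
  have hbE : b ∈ M.E := hB.subset_ground hbB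
  refine ⟨b, hbB, ?_, ?_⟩
  · exact base_insert_of_not_mem_closure hA ha hbE
      (fun h => hAB.ne_of_mem h.1 hbB rfl) hbH
  · exact base_insert_of_not_mem_closure hB hbB haE
      (fun h => hAB.ne_of_mem ha h.1 rfl) hbD.2
end

section
/- Let A and B be two disjoint bases of a matroid M of rank greater than 1. Then there exist two disjoint symmetric exchanges relative to A and B: that is, there exist a₁, a₂ ∈ A with a₁ ≠ a₂ and b₁, b₂ ∈ B with b₁ ≠ b₂ such that (A - a₁) + b₁ and (B - b₁) + a₁ are bases, and (A - a₂) + b₂ and (B - b₂) + a₂ are bases. -/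
open Set

/-- If `a` lies in the closure of a finite set `B`, there is a subset `B₀ ⊆ B` with
`a ∈ cl B₀` that is minimal: removing any element loses `a`. -/
lemma exists_min_closure_subset {α : Type*} (M : Matroid α) :
    ∀ (n : ℕ) (B : Set α), B.Finite → B.ncard = n → ∀ a, a ∈ M.closure B →
      ∃ B₀ ⊆ B, a ∈ M.closure B₀ ∧ ∀ b ∈ B₀, a ∉ M.closure (B₀ \ {b}) := by
  intro n
  induction n using Nat.strong_induction_on with
  | _ n ih =>
    intro B hBfin hcard a ha
    by_cases h : ∀ b ∈ B, a ∉ M.closure (B \ {b})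
    · exact ⟨B, Subset.rfl, ha, h⟩
    · push_neg at h
      obtain ⟨b, hbB, hb⟩ := h
      have hlt : (B \ {b}).ncard < n := by
        subst hcard
        exact Set.ncard_diff_singleton_lt_of_mem hbB hBfin
      obtain ⟨B₀, hB₀, h1, h2⟩ := ih _ hlt (B \ {b}) (hBfin.diff) rfl a hb
      exact ⟨B₀, hB₀.trans diff_subset, h1, h2⟩

/-- Strong (symmetric) basis exchange. -/
lemma strong_exchange' {α : Type*} (M : Matroid α) {A B : Set α}
    (hA : M.IsBase A) (hB : M.IsBase B) (hE : M.E.Finite) {a : α} (haA : a ∈ A) (haB : a ∉ B) :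
    ∃ b ∈ B, M.IsBase (insert b (A \ {a})) ∧ M.IsBase (insert a (B \ {b})) := by
  have haE : a ∈ M.E := hA.subset_ground haA
  have hBfin : B.Finite := hE.subset hB.subset_ground
  have haclB : a ∈ M.closure B := by rw [hB.closure_eq]; exact haE
  obtain ⟨B₀, hB₀B, haB₀, hmin⟩ :=
    exists_min_closure_subset M B.ncard B hBfin rfl a haclB
  -- B₀ consists of elements b with a ∉ cl (B \ {b})
  have hgood : ∀ b ∈ B₀, a ∉ M.closure (B \ {b}) := by
    intro b hbB₀ hacl
    have hbB : b ∈ B := hB₀B hbB₀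
    have hnot : a ∉ M.closure (B₀ \ {b}) := hmin b hbB₀
    have hex : b ∈ M.closure (insert a (B₀ \ {b})) \ M.closure (B₀ \ {b}) := by
      refine M.closure_exchange ⟨?_, hnot⟩
      rwa [insert_diff_singleton, insert_eq_of_mem hbB₀]
    have h1 : b ∈ M.closure (insert a (B \ {b})) :=
      M.closure_subset_closure (insert_subset_insert (diff_subset_diff_left hB₀B)) hex.1
    rw [M.closure_insert_eq_of_mem_closure hacl] at h1
    exact hB.indep.notMem_closure_diff_of_mem hbB h1
  -- some element of B₀ avoids cl (A \ {a})
  have hB₀cl : ¬ (B₀ ⊆ M.closure (A \ {a})) := by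
    intro hsub
    have : a ∈ M.closure (A \ {a}) := by
      have h1 : M.closure B₀ ⊆ M.closure (M.closure (A \ {a})) :=
        M.closure_subset_closure hsub
      rw [M.closure_closure] at h1
      exact h1 haB₀
    exact hA.indep.notMem_closure_diff_of_mem haA this
  obtain ⟨b, hbB₀, hbcl⟩ := not_subset.1 hB₀cl
  have hbB : b ∈ B := hB₀B hbB₀
  have hbE : b ∈ M.E := hB.subset_ground hbB
  have hba : b ≠ a := fun h => haB (h ▸ hbB)
  have hbA : b ∉ A := by
    intro hbA
    exact hbcl (M.mem_closure_of_mem ⟨hbA, hba⟩ (diff_subset.trans hA.subset_ground))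
  refine ⟨b, hbB, ?_, ?_⟩
  · -- insert b (A \ {a}) is a base
    have hind : M.Indep (insert b (A \ {a})) :=
      ((hA.indep.diff {a}).notMem_closure_iff hbE).1 hbcl |>.1
    have : M.IsBase ((insert b A) \ {a}) := by
      refine hA.exchange_isBase_of_indep' haA hbA ?_
      rwa [← insert_diff_singleton_comm hba]
    rwa [← insert_diff_singleton_comm hba] at this
  · -- insert a (B \ {b}) is a base
    have hacl : a ∉ M.closure (B \ {b}) := hgood b hbB₀
    have hind : M.Indep (insert a (B \ {b})) :=
      ((hB.indep.diff {b}).notMem_closure_iff haE).1 hacl |>.1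
    have : M.IsBase ((insert a B) \ {b}) := by
      refine hB.exchange_isBase_of_indep' hbB haB ?_
      rwa [← insert_diff_singleton_comm hba.symm]
    rwa [← insert_diff_singleton_comm hba.symm] at this

theorem two_disjoint_symmetric_exchanges {α : Type*} (M : Matroid α) (A B : Set α)
    (hA : M.IsBase A) (hB : M.IsBase B) (hAB : Disjoint A B)
    (hE : M.E.Finite) (hrk : 1 < A.ncard) :
    ∃ a₁ ∈ A, ∃ a₂ ∈ A, ∃ b₁ ∈ B, ∃ b₂ ∈ B, a₁ ≠ a₂ ∧ b₁ ≠ b₂ ∧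
      M.IsBase (insert b₁ (A \ {a₁})) ∧ M.IsBase (insert a₁ (B \ {b₁})) ∧
      M.IsBase (insert b₂ (A \ {a₂})) ∧ M.IsBase (insert a₂ (B \ {b₂})) := by
  have hBcard : 1 < B.ncard := by rwa [hB.ncard_eq_ncard_of_isBase hA]
  have hAne : A.Nonempty := by
    rcases Set.eq_empty_or_nonempty A with h | h
    · simp [h] at hrk
    · exact h
  obtain ⟨a₁, ha₁A⟩ := hAne
  have ha₁B : a₁ ∉ B := disjoint_left.1 hAB ha₁A
  obtain ⟨b₁, hb₁B, hx₁, hx₂⟩ := strong_exchange' M hA hB hE ha₁A ha₁B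
  obtain ⟨b₂, hb₂B, hb₂ne⟩ := Set.exists_ne_of_one_lt_ncard hBcard b₁
  have hb₂A : b₂ ∉ A := disjoint_right.1 hAB hb₂B
  obtain ⟨x, hxA, hy₁, hy₂⟩ := strong_exchange' M hB hA hE hb₂B hb₂A
  by_cases hxa : x = a₁
  · subst hxa
    obtain ⟨a₂, ha₂A, ha₂ne⟩ := Set.exists_ne_of_one_lt_ncard hrk x
    have ha₂B : a₂ ∉ B := disjoint_left.1 hAB ha₂A
    obtain ⟨b, hbB, hz₁, hz₂⟩ := strong_exchange' M hA hB hE ha₂A ha₂B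
    by_cases hbb : b = b₂
    · subst hbb
      exact ⟨x, hxA, a₂, ha₂A, b₁, hb₁B, b, hbB, ha₂ne.symm, hb₂ne.symm, hx₁, hx₂, hz₁, hz₂⟩
    · exact ⟨x, hxA, a₂, ha₂A, b₂, hb₂B, b, hbB, ha₂ne.symm, fun h => hbb h.symm,
        hy₂, hy₁, hz₁, hz₂⟩
  · exact ⟨a₁, ha₁A, x, hxA, b₁, hb₁B, b₂, hb₂B, fun h => hxa h.symm, hb₂ne.symm,
      hx₁, hx₂, hy₂, hy₁⟩
end

section
/- Let A and B be two disjoint bases of a matroid M, and let a', a'' be two distinct elements of A. Define Conn(a',a'',A,B) = { b ∈ B : b ∈ C(B,a') and a'' ∈ C(A,b) }, where C(I,x) denotes the fundamental circuit of x with respect to the base I with x removed (the support of x in I). Then |Conn(a',a'',A,B)| ≠ 1. -/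
open Set

/-- Each element of a circuit is in the closure of the rest. -/
lemma IsCircuitOf.mem_closure_diff {α : Type*} {M : Matroid α} {C : Set α}
    (hC : IsCircuitOf M C) {e : α} (he : e ∈ C) : e ∈ M.closure (C \ {e}) := by
  have hCE : C ⊆ M.E := hC.1.subset_ground
  have hss : C \ {e} ⊂ C := sdiff_singleton_ssubset.2 he
  have hind : M.Indep (C \ {e}) := by
    have := hC.2 _ hss
    rw [Matroid.dep_iff, not_and] at this
    by_contra h
    exact (this h) (diff_subset.trans hCE)
  have hdep : M.Dep (insert e (C \ {e})) := by
    rw [insert_diff_singleton, insert_eq_of_mem he]; exact hC.1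
  exact (hind.insert_dep_iff.1 hdep).1

/-- Fundamental circuit existence: if `I` is independent and `e ∈ cl I \ I`, there is a
circuit containing `e` inside `insert e I`. -/
lemma exists_fundCircuit {α : Type*} {M : Matroid α} {I : Set α} (hI : M.Indep I)
    {e : α} (hecl : e ∈ M.closure I) (heI : e ∉ I) :
    ∃ C ⊆ insert e I, IsCircuitOf M C ∧ e ∈ C := by
  set Js : Set (Set α) := {J | J ⊆ I ∧ e ∈ M.closure J} with hJs
  have hne : Js.Nonempty := ⟨I, Subset.rfl, hecl⟩
  have hIs : ∀ J ∈ Js, J ⊆ I := fun J hJ => hJ.1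
  set J₀ : Set α := ⋂₀ Js with hJ₀
  have hJ₀I : J₀ ⊆ I := (sInter_subset_of_mem hne.some_mem).trans (hIs _ hne.some_mem)
  have hJ₀ind : M.Indep J₀ := hI.subset hJ₀I
  have heJ₀ : e ∈ M.closure J₀ := by
    rw [hJ₀, hI.closure_sInter_eq_biInter_closure_of_forall_subset hne hIs, mem_iInter₂]
    exact fun J hJ => hJ.2
  have heJ₀' : e ∉ J₀ := fun h => heI (hJ₀I h)
  refine ⟨insert e J₀, insert_subset_insert hJ₀I, ⟨?_, ?_⟩, mem_insert _ _⟩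
  · exact hJ₀ind.insert_dep_iff.2 ⟨heJ₀, heJ₀'⟩
  · intro D hD hdep
    by_cases heD : e ∈ D
    · have hD' : D \ {e} ⊂ J₀ := by
        rw [ssubset_iff_of_subset (fun x hx => by
          have := hD.1 hx.1
          rcases this with h | h
          · exact absurd h hx.2
          · exact h)]
        obtain ⟨x, hxJ, hxD⟩ : ∃ x ∈ insert e J₀, x ∉ D := by
          obtain ⟨x, hx1, hx2⟩ := exists_of_ssubset hD
          exact ⟨x, hx1, hx2⟩
        rcases hxJ with rfl | hxJ
        · exact absurd heD hxD
        · exact ⟨x, hxJ, fun h => hxD h.1⟩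
      have hind' : M.Indep (D \ {e}) := hJ₀ind.subset hD'.subset
      have : M.Dep (insert e (D \ {e})) := by
        rwa [insert_diff_singleton, insert_eq_of_mem heD]
      have hmem : e ∈ M.closure (D \ {e}) := (hind'.insert_dep_iff.1 this).1
      have : D \ {e} ∈ Js := ⟨hD'.subset.trans hJ₀I, hmem⟩
      exact absurd (sInter_subset_of_mem this) (not_subset_of_ssubset hD')
    · have : D ⊆ J₀ := fun x hx => by
        rcases hD.1 hx with rfl | h
        · exact absurd hx heD
        · exact h
      exact (hJ₀ind.subset this).not_dep hdep

theorem conn_not_singleton {α : Type*} (M : Matroid α) (A B : Set α)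
    (hA : M.IsBase A) (hB : M.IsBase B) (hAB : Disjoint A B)
    (a' a'' : α) (ha' : a' ∈ A) (ha'' : a'' ∈ A) (hne : a' ≠ a'') :
    {b ∈ B | b ∈ suppOf M B a' ∧ a'' ∈ suppOf M A b}.encard ≠ 1 := by
  intro h1
  rw [Set.encard_eq_one] at h1
  obtain ⟨b₀, hb₀⟩ := h1
  have hb₀mem : b₀ ∈ {b ∈ B | b ∈ suppOf M B a' ∧ a'' ∈ suppOf M A b} := hb₀ ▸ rfl
  obtain ⟨hb₀B, hb₀supp, ha''supp⟩ := hb₀mem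
  have hAE : A ⊆ M.E := hA.subset_ground
  have hBE : B ⊆ M.E := hB.subset_ground
  have hA'E : A \ {a''} ⊆ M.E := diff_subset.trans hAE
  -- key step: any b ∈ B with a'' ∉ suppOf M A b lies in cl (A \ {a''})
  have key : ∀ b ∈ B, a'' ∉ suppOf M A b → b ∈ M.closure (A \ {a''}) := by
    intro b hbB hbsupp
    have hbA : b ∉ A := fun h => hAB.ne_of_mem h hbB rfl
    have hbcl : b ∈ M.closure A := by
      rw [hA.closure_eq]; exact hBE hbB
    obtain ⟨C, hCsub, hCcirc, hbC⟩ := exists_fundCircuit hA.indep hbcl hbA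
    have ha''C : a'' ∉ C := fun h =>
      hbsupp ⟨ha'', C, hCsub, hCcirc, hbC, h⟩
    have : C \ {b} ⊆ A \ {a''} := by
      intro x hx
      rcases hCsub hx.1 with rfl | hxA
      · exact absurd rfl hx.2
      · exact ⟨hxA, fun h => ha''C (h ▸ hx.1)⟩
    exact M.closure_subset_closure this (hCcirc.mem_closure_diff hbC)
  -- step: b₀ ∈ cl (A \ {a''})
  obtain ⟨_, C₁, hC₁sub, hC₁circ, ha'C₁, hb₀C₁⟩ := hb₀supp
  have hb₀cl : b₀ ∈ M.closure (A \ {a''}) := by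
    have hsub : C₁ \ {b₀} ⊆ M.closure (A \ {a''}) := by
      intro x hx
      rcases hC₁sub hx.1 with rfl | hxB
      · exact M.mem_closure_of_mem ⟨ha', hne⟩ hA'E
      · -- x ∈ B, x ∈ suppOf M B a' (witnessed by C₁), x ≠ b₀, so x ∉ Conn
        have hxsupp : x ∈ suppOf M B a' := ⟨hxB, C₁, hC₁sub, hC₁circ, ha'C₁, hx.1⟩
        have hxne : x ≠ b₀ := hx.2
        have : x ∉ {b ∈ B | b ∈ suppOf M B a' ∧ a'' ∈ suppOf M A b} := by
          rw [hb₀]; simpa using hxne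
        have ha''x : a'' ∉ suppOf M A x := fun h => this ⟨hxB, hxsupp, h⟩
        exact key x hxB ha''x
    have h1 := hC₁circ.mem_closure_diff hb₀C₁
    have h2 := M.closure_subset_closure hsub h1
    rwa [M.closure_closure] at h2
  -- step: a'' ∈ cl (insert b₀ (A \ {a''})) ⊆ cl (A \ {a''})
  obtain ⟨_, C₂, hC₂sub, hC₂circ, hb₀C₂, ha''C₂⟩ := ha''supp
  have ha''b₀ : a'' ≠ b₀ := fun h => hAB.ne_of_mem ha'' hb₀B h
  have hsub2 : C₂ \ {a''} ⊆ insert b₀ (A \ {a''}) := by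
    intro x hx
    rcases hC₂sub hx.1 with rfl | hxA
    · exact mem_insert _ _
    · exact mem_insert_of_mem _ ⟨hxA, hx.2⟩
  have hsub3 : insert b₀ (A \ {a''}) ⊆ M.closure (A \ {a''}) :=
    insert_subset hb₀cl (M.subset_closure _ hA'E)
  have ha''cl : a'' ∈ M.closure (A \ {a''}) := by
    have h1 := hC₂circ.mem_closure_diff ha''C₂
    have h2 := M.closure_subset_closure hsub2 h1
    have h3 := M.closure_subset_closure hsub3 h2
    rwa [M.closure_closure] at h3
  exact hA.indep.notMem_closure_sdiff_of_mem ha'' ha''cl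
end

section
/- Let B be a base of a matroid M, let a ∉ B with B + a dependent, and let b ∈ C(B,a) (the support of a in B). Then B' = B - b + a is a base, and the support of b in B' satisfies C(B',b) = C(B,a) - b + a. -/
open Set

lemma IsCircuitOf.diff_indep {α : Type*} {M : Matroid α} {C : Set α} (hC : IsCircuitOf M C)
    {y : α} (hy : y ∈ C) : M.Indep (C \ {y}) := by
  have hsub : C \ {y} ⊂ C := sdiff_singleton_ssubset.mpr hy
  have hE : C \ {y} ⊆ M.E := diff_subset.trans hC.1.subset_ground
  exact (M.not_dep_iff hE).mp (hC.2 _ hsub)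

lemma IsCircuitOf.mem_closure {α : Type*} {M : Matroid α} {C : Set α} (hC : IsCircuitOf M C)
    {y : α} (hy : y ∈ C) : y ∈ M.closure (C \ {y}) := by
  have h := (hC.diff_indep hy).insert_dep_iff (e := y)
  rw [insert_diff_singleton, insert_eq_self.mpr hy] at h
  exact ((h.mp hC.1).1)

/-- Uniqueness of the circuit through `a` in `insert a I` for `I` independent. -/
lemma circuit_unique {α : Type*} {M : Matroid α} {I : Set α} {a : α} (hI : M.Indep I)
    (haI : a ∉ I) {C₁ C₂ : Set α} (hC₁ : IsCircuitOf M C₁) (hs₁ : C₁ ⊆ insert a I)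
    (ha₁ : a ∈ C₁) (hC₂ : IsCircuitOf M C₂) (hs₂ : C₂ ⊆ insert a I) (ha₂ : a ∈ C₂) :
    C₁ = C₂ := by
  set J₁ := C₁ \ {a} with hJ₁
  set J₂ := C₂ \ {a} with hJ₂
  have hJ₁I : J₁ ⊆ I := by
    intro y hy; rcases hs₁ hy.1 with rfl | h; exact absurd rfl hy.2; exact h
  have hJ₂I : J₂ ⊆ I := by
    intro y hy; rcases hs₂ hy.1 with rfl | h; exact absurd rfl hy.2; exact h
  have hind : M.Indep (J₁ ∪ J₂) := hI.subset (union_subset hJ₁I hJ₂I)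
  have hmem : a ∈ M.closure (J₁ ∩ J₂) := by
    rw [hind.closure_inter_eq_inter_closure]
    exact ⟨hC₁.mem_closure ha₁, hC₂.mem_closure ha₂⟩
  have haJ : a ∉ J₁ ∩ J₂ := fun h => haI (hJ₁I h.1)
  have hdep : M.Dep (insert a (J₁ ∩ J₂)) :=
    ((hind.subset (inter_subset_left.trans subset_union_left)).insert_dep_iff).mpr ⟨hmem, haJ⟩
  have h1 : insert a (J₁ ∩ J₂) = C₁ := by
    by_contra hne
    exact hC₁.2 _ (ssubset_of_ne_of_subset hne
      (insert_subset ha₁ ((inter_subset_left).trans diff_subset))) hdep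
  have h2 : insert a (J₁ ∩ J₂) = C₂ := by
    by_contra hne
    exact hC₂.2 _ (ssubset_of_ne_of_subset hne
      (insert_subset ha₂ ((inter_subset_right).trans diff_subset))) hdep
  rw [← h1, h2]

theorem supp_after_exchange {α : Type*} (M : Matroid α) (B : Set α) (a b : α)
    (hB : M.IsBase B) (haB : a ∉ B) (hdep : M.Dep (insert a B))
    (hb : b ∈ suppOf M B a) :
    M.IsBase (insert a (B \ {b})) ∧
      suppOf M (insert a (B \ {b})) b = insert a (suppOf M B a \ {b}) := by
  obtain ⟨hbB, C₀, hC₀sub, hC₀, haC₀, hbC₀⟩ := hb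
  have hab : a ≠ b := fun h => haB (h ▸ hbB)
  have haE : a ∈ M.E := hdep.subset_ground (mem_insert a B)
  -- a ∉ closure (B \ {b})
  have hclos : a ∉ M.closure (B \ {b}) := by
    intro hmem
    have h1 : b ∈ M.closure (C₀ \ {b}) := hC₀.mem_closure hbC₀
    have h2 : C₀ \ {b} ⊆ insert a (B \ {b}) := by
      intro y hy
      rcases hC₀sub hy.1 with rfl | h
      · exact mem_insert _ _
      · exact mem_insert_of_mem _ ⟨h, hy.2⟩
    have h3 : b ∈ M.closure (insert a (B \ {b})) :=
      M.closure_subset_closure h2 h1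
    rw [Matroid.closure_insert_eq_of_mem_closure hmem] at h3
    exact hB.indep.notMem_closure_sdiff_of_mem hbB h3
  have hind : M.Indep (insert a (B \ {b})) := by
    rw [(hB.indep.subset diff_subset).insert_indep_iff_of_notMem
      (fun h => haB h.1)]
    exact ⟨haE, hclos⟩
  have hbase : M.IsBase (insert a (B \ {b})) := hB.exchange_isBase_of_indep haB hind
  refine ⟨hbase, ?_⟩
  have hins : insert b (insert a (B \ {b})) = insert a B := by
    rw [insert_comm, insert_diff_singleton, insert_eq_self.mpr hbB]
  -- suppOf M B a = B ∩ C₀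
  have hsupp1 : suppOf M B a = B ∩ C₀ := by
    ext y
    constructor
    · rintro ⟨hyB, C, hCsub, hC, haC, hyC⟩
      exact ⟨hyB, circuit_unique hB.indep haB hC₀ hC₀sub haC₀ hC hCsub haC ▸ hyC⟩
    · rintro ⟨hyB, hyC⟩
      exact ⟨hyB, C₀, hC₀sub, hC₀, haC₀, hyC⟩
  have hsupp2 : suppOf M (insert a (B \ {b})) b = insert a (B \ {b}) ∩ C₀ := by
    ext y
    constructor
    · rintro ⟨hyB', C, hCsub, hC, hbC, hyC⟩
      rw [hins] at hCsub
      have haC : a ∈ C := by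
        by_contra haC
        have : C ⊆ B := fun z hz => (hCsub hz).resolve_left (fun h => haC (h ▸ hz))
        exact ((M.not_dep_iff (this.trans hB.subset_ground)).mpr
          (hB.indep.subset this)) hC.1
      exact ⟨hyB', circuit_unique hB.indep haB hC₀ hC₀sub haC₀ hC hCsub haC ▸ hyC⟩
    · rintro ⟨hyB', hyC⟩
      refine ⟨hyB', C₀, ?_, hC₀, hbC₀, hyC⟩
      rw [hins]; exact hC₀sub
  rw [hsupp1, hsupp2]
  ext y
  simp only [mem_insert_iff, mem_inter_iff, mem_diff, mem_singleton_iff]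
  constructor
  · rintro ⟨rfl | ⟨hyB, hyb⟩, hyC⟩
    · exact Or.inl rfl
    · exact Or.inr ⟨⟨hyB, hyC⟩, hyb⟩
  · rintro (rfl | ⟨⟨hyB, hyC⟩, hyb⟩)
    · exact ⟨Or.inl rfl, haC₀⟩
    · exact ⟨Or.inr ⟨hyB, hyb⟩, hyC⟩
end

section
/- Let A be a base of a matroid M, let b ∉ A with a ∈ C(A,b), so that A' = A - a + b is a base. Then for any b' ∉ A with b' ≠ b and b' ∉ A': b ∈ C(A',b') if and only if a ∈ C(A,b'). -/
open Set

section Aux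

variable {α : Type*} {M : Matroid α} {C I : Set α} {x e : α}

lemma IsCircuitOf.subset_ground (hC : IsCircuitOf M C) : C ⊆ M.E := hC.1.subset_ground

lemma IsCircuitOf.diff_indep_s8 (hC : IsCircuitOf M C) (he : e ∈ C) : M.Indep (C \ {e}) := by
  by_contra h
  exact hC.2 _ (sdiff_singleton_ssubset.2 he)
    ((Matroid.dep_iff).2 ⟨h, diff_subset.trans hC.subset_ground⟩)

lemma IsCircuitOf.mem_closure_s8 (hC : IsCircuitOf M C) (he : e ∈ C) :
    e ∈ M.closure (C \ {e}) := by
  have hI := hC.diff_indep_s8 he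
  have : M.Dep (insert e (C \ {e})) := by
    rw [insert_diff_singleton, insert_eq_of_mem he]; exact hC.1
  exact ((hI.insert_dep_iff).1 this).1

lemma mem_of_circuitOf_subset_insert (hI : M.Indep I) (hC : IsCircuitOf M C)
    (hCI : C ⊆ insert x I) : x ∈ C := by
  by_contra hx
  exact hC.1.not_indep (hI.subset fun y hy => ((hCI hy).resolve_left (fun h => hx (h ▸ hy))))

/-- Uniqueness of the circuit inside `insert x I` for independent `I`. -/
lemma circuitOf_unique (hI : M.Indep I) {C₁ C₂ : Set α} (h₁ : IsCircuitOf M C₁)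
    (h₂ : IsCircuitOf M C₂) (hC₁ : C₁ ⊆ insert x I) (hC₂ : C₂ ⊆ insert x I) : C₁ = C₂ := by
  have hx₁ : x ∈ C₁ := mem_of_circuitOf_subset_insert hI h₁ hC₁
  have hx₂ : x ∈ C₂ := mem_of_circuitOf_subset_insert hI h₂ hC₂
  have key : ∀ C₁ C₂ : Set α, IsCircuitOf M C₁ → IsCircuitOf M C₂ → C₁ ⊆ insert x I →
      C₂ ⊆ insert x I → x ∈ C₁ → x ∈ C₂ → C₁ ⊆ C₂ := by
    intro C₁ C₂ h₁ h₂ hC₁ hC₂ hx₁ hx₂ y hy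
    by_contra hyC₂
    have hyx : y ≠ x := fun h => hyC₂ (h ▸ hx₂)
    have hyI : y ∈ I := ((hC₁ hy).resolve_left hyx)
    have hycl : y ∈ M.closure (C₁ \ {y}) := h₁.mem_closure_s8 hy
    have hxcl : x ∈ M.closure (I \ {y}) := by
      refine M.closure_subset_closure ?_ (h₂.mem_closure_s8 hx₂)
      intro z hz
      exact ⟨((hC₂ hz.1).resolve_left hz.2), fun h => hyC₂ (h ▸ hz.1)⟩
    have hsub : C₁ \ {y} ⊆ insert x (I \ {y}) := by
      intro z hz
      rcases hC₁ hz.1 with h | h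
      · exact Or.inl h
      · exact Or.inr ⟨h, hz.2⟩
    have : y ∈ M.closure (I \ {y}) := by
      have h1 : M.closure (C₁ \ {y}) ⊆ M.closure (insert x (I \ {y})) :=
        M.closure_subset_closure hsub
      rw [Matroid.closure_insert_eq_of_mem_closure hxcl] at h1
      exact h1 hycl
    exact hI.notMem_closure_sdiff_of_mem hyI this
  exact subset_antisymm (key C₁ C₂ h₁ h₂ hC₁ hC₂ hx₁ hx₂) (key C₂ C₁ h₂ h₁ hC₂ hC₁ hx₂ hx₁)

/-- Existence of a circuit inside a dependent `insert x I` for independent `I`. -/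
lemma circuitOf_exists (hI : M.Indep I) (hdep : M.Dep (insert x I)) :
    ∃ C ⊆ insert x I, IsCircuitOf M C ∧ x ∈ C := by
  have hxI : x ∉ I := fun h => hdep.not_indep (by rwa [insert_eq_of_mem h])
  have hxcl : x ∈ M.closure I := ((hI.insert_dep_iff).1 hdep).1
  set Js : Set (Set α) := {J | J ⊆ I ∧ x ∈ M.closure J} with hJs
  have hne : Js.Nonempty := ⟨I, Subset.rfl, hxcl⟩
  set S : Set α := ⋂₀ Js with hS
  have hSI : S ⊆ I := sInter_subset_of_mem (⟨Subset.rfl, hxcl⟩ : I ∈ Js)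
  have hScl : x ∈ M.closure S := by
    rw [hS, hI.closure_sInter_eq_biInter_closure_of_forall_subset hne (fun J hJ => hJ.1)]
    exact mem_iInter₂.2 fun J hJ => hJ.2
  have hxS : x ∉ S := fun h => hxI (hSI h)
  refine ⟨insert x S, insert_subset_insert hSI, ⟨?_, ?_⟩, mem_insert _ _⟩
  · exact ((hI.subset hSI).insert_dep_iff).2 ⟨hScl, hxS⟩
  · intro D hD
    intro hDdep
    by_cases hxD : x ∈ D
    · have hTS : D \ {x} ⊆ S := fun z hz => ((hD.1 hz.1).resolve_left hz.2)
      have hTdep : M.Dep (insert x (D \ {x})) := by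
        rwa [insert_diff_singleton, insert_eq_of_mem hxD]
      have hTcl : x ∈ M.closure (D \ {x}) :=
        (((hI.subset (hTS.trans hSI)).insert_dep_iff).1 hTdep).1
      have hST : S ⊆ D \ {x} := sInter_subset_of_mem ⟨hTS.trans hSI, hTcl⟩
      obtain ⟨z, hzC, hzD⟩ := Set.exists_of_ssubset hD
      rcases hzC with rfl | hzS
      · exact hzD hxD
      · exact hzD (hST hzS).1
    · have : D ⊆ S := fun z hz => ((hD.1 hz).resolve_left (fun h => hxD (h ▸ hz)))
      exact hDdep.not_indep (hI.subset (this.trans hSI))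

end Aux

theorem supp_transfer_after_exchange {α : Type*} (M : Matroid α) (A : Set α) (a b : α)
    (hA : M.IsBase A) (hbA : b ∉ A) (ha : a ∈ suppOf M A b)
    (b' : α) (hb'A : b' ∉ A) (hb'b : b' ≠ b) (hb'A' : b' ∉ insert b (A \ {a})) :
    b ∈ suppOf M (insert b (A \ {a})) b' ↔ a ∈ suppOf M A b' := by
  obtain ⟨haA, C, hCsub, hC, hbC, haC⟩ := ha
  have hAind := hA.indep
  have hab : a ≠ b := fun h => hbA (h ▸ haA)
  have haA' : a ∉ insert b (A \ {a}) := by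
    rintro (h | h)
    · exact hab h
    · exact h.2 rfl
  have hdiff : M.Indep (A \ {a}) := hAind.subset diff_subset
  have hCsub' : C \ {a} ⊆ insert b (A \ {a}) := by
    intro z hz
    rcases hCsub hz.1 with h | h
    · exact Or.inl h
    · exact Or.inr ⟨h, hz.2⟩
  have hacl : a ∈ M.closure (C \ {a}) := hC.mem_closure_s8 haC
  have hA'ind : M.Indep (insert b (A \ {a})) := by
    by_contra hni
    have hbE : b ∈ M.E := hC.subset_ground hbC
    have hbnA : b ∉ A \ {a} := fun h => hbA h.1
    rw [hdiff.insert_indep_iff_of_notMem hbnA] at hni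
    have hbcl : b ∈ M.closure (A \ {a}) := by
      by_contra h; exact hni ⟨hbE, h⟩
    have h1 : M.closure (C \ {a}) ⊆ M.closure (insert b (A \ {a})) :=
      M.closure_subset_closure hCsub'
    rw [Matroid.closure_insert_eq_of_mem_closure hbcl] at h1
    exact hAind.notMem_closure_sdiff_of_mem haA (h1 hacl)
  have haclA' : a ∈ M.closure (insert b (A \ {a})) :=
    M.closure_subset_closure hCsub' hacl
  have hEcl : M.E ⊆ M.closure (insert b (A \ {a})) := by
    have hAsub : A ⊆ M.closure (insert b (A \ {a})) := by
      intro z hz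
      by_cases hza : z = a
      · exact hza ▸ haclA'
      · exact M.subset_closure _ hA'ind.subset_ground (Or.inr ⟨hz, hza⟩)
    rw [← hA.closure_eq]
    exact Matroid.closure_subset_closure_of_subset_closure hAsub
  constructor
  · rintro ⟨hbA'', D', hD'sub, hD', hb'D', hbD'⟩
    have hb'E : b' ∈ M.E := hD'.subset_ground hb'D'
    have hdep : M.Dep (insert b' A) :=
      hAind.insert_dep_iff.2 ⟨hA.closure_eq ▸ hb'E, hb'A⟩
    obtain ⟨D, hDsub, hD, hb'D⟩ := circuitOf_exists hAind hdep
    refine ⟨haA, D, hDsub, hD, hb'D, ?_⟩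
    by_contra haD
    have hDsub' : D ⊆ insert b' (insert b (A \ {a})) := by
      intro z hz
      rcases hDsub hz with h | h
      · exact Or.inl h
      · exact Or.inr (Or.inr ⟨h, fun h' => haD (h' ▸ hz)⟩)
    have hDD' : D = D' := circuitOf_unique hA'ind hD hD' hDsub' hD'sub
    rcases hDsub (hDD' ▸ hbD' : b ∈ D) with h | h
    · exact hb'b h.symm
    · exact hbA h
  · rintro ⟨haA2, D, hDsub, hD, hb'D, haD⟩
    have hb'E : b' ∈ M.E := hD.subset_ground hb'D
    have hdep' : M.Dep (insert b' (insert b (A \ {a}))) :=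
      hA'ind.insert_dep_iff.2 ⟨hEcl hb'E, hb'A'⟩
    obtain ⟨D', hD'sub, hD', hb'D'⟩ := circuitOf_exists hA'ind hdep'
    refine ⟨mem_insert _ _, D', hD'sub, hD', hb'D', ?_⟩
    by_contra hbD'
    have hD'subA : D' ⊆ insert b' A := by
      intro z hz
      rcases hD'sub hz with h | h
      · exact Or.inl h
      · rcases h with h | h
        · exact absurd (h ▸ hz) hbD'
        · exact Or.inr h.1
    have hDD' : D' = D := circuitOf_unique hAind hD' hD hD'subA hDsub
    rcases hD'sub (hDD' ▸ haD : a ∈ D') with h | h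
    · exact hb'A (h ▸ haA)
    · exact haA' h
end

section
/- Let A and B be disjoint bases of a matroid M, and suppose a₁ ∈ A and b₁ ∈ B are symmetrically exchangeable (both A - a₁ + b₁ and B - b₁ + a₁ are bases). Let a₂ ∈ A, b₂ ∈ B with a₂ ≠ a₁, b₂ ≠ b₁, and B' = B - b₁ + a₁. If b₂ ∉ C(B,a₁) or b₁ ∉ C(B,a₂), then b₂ ∈ C(B',a₂) if and only if b₂ ∈ C(B,a₂). -/
open Set

/-- For a base `B` and `x ∈ M.E \ B`, the support of `x` in `B` is exactly the set of `z ∈ B`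
with `x ∉ M.closure (B \ {z})`. -/
lemma suppOf_base_eq {α : Type*} (M : Matroid α) {B : Set α} {x : α}
    (hB : M.IsBase B) (hxE : x ∈ M.E) (hxB : x ∉ B) :
    suppOf M B x = {z ∈ B | x ∉ M.closure (B \ {z})} := by
  have hBi : M.Indep B := hB.indep
  have hBE : B ⊆ M.E := hBi.subset_ground
  ext z
  constructor
  · rintro ⟨hzB, C, hCB, ⟨hCdep, hCmin⟩, hxC, hzC⟩
    refine ⟨hzB, fun hxcl => ?_⟩
    -- `C \ {z}` is independent, and `z ∈ closure (C \ {z})`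
    have hzx : z ≠ x := fun h => hxB (h ▸ hzB)
    have hCz : M.Indep (C \ {z}) := by
      by_contra hind
      exact hCmin _ (sdiff_singleton_ssubset.2 hzC)
        ((M.dep_iff).2 ⟨hind, (diff_subset.trans hCB).trans
          (insert_subset hxE hBE)⟩)
    have hzcl : z ∈ M.closure (C \ {z}) := by
      have hdep : M.Dep (insert z (C \ {z})) := by
        rwa [insert_diff_singleton, insert_eq_of_mem hzC]
      rw [hCz.insert_dep_iff] at hdep
      exact hdep.1
    have hsub : C \ {z} ⊆ insert x (B \ {z}) := by
      rintro w ⟨hwC, hwz⟩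
      rcases hCB hwC with h | h
      · exact Or.inl h
      · exact mem_insert_of_mem _ ⟨h, hwz⟩
    have : z ∈ M.closure (B \ {z}) := by
      have h1 : M.closure (insert x (B \ {z})) = M.closure (B \ {z}) :=
        Matroid.closure_insert_eq_of_mem_closure hxcl
      exact h1 ▸ (M.closure_subset_closure hsub) hzcl
    exact hBi.notMem_closure_sdiff_of_mem hzB this
  · rintro ⟨hzB, hxcl⟩
    set T : Set α := {w ∈ B | x ∉ M.closure (B \ {w})} with hT
    set Js : Set (Set α) := {J | J ⊆ B ∧ x ∈ M.closure J} with hJs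
    have hxclB : x ∈ M.closure B := by rw [hB.closure_eq]; exact hxE
    have hBJ : B ∈ Js := ⟨Subset.rfl, hxclB⟩
    have hTJ : T = ⋂₀ Js := by
      ext w
      constructor
      · rintro ⟨hwB, hw⟩ J ⟨hJB, hxJ⟩
        by_contra hwJ
        exact hw (M.closure_subset_closure (subset_diff_singleton hJB hwJ) hxJ)
      · intro hw
        have hwB : w ∈ B := hw B hBJ
        refine ⟨hwB, fun hx => ?_⟩
        have := hw (B \ {w}) ⟨diff_subset, hx⟩
        exact this.2 rfl
      -- done
    have hTB : T ⊆ B := sep_subset _ _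
    have hTi : M.Indep T := hBi.subset hTB
    have hxT : x ∉ T := fun h => hxB (hTB h)
    have hJne : Js.Nonempty := ⟨B, hBJ⟩
    have hxclT : x ∈ M.closure T := by
      rw [hTJ, hBi.closure_sInter_eq_biInter_closure_of_forall_subset hJne (fun J hJ => hJ.1)]
      exact mem_iInter₂.2 fun J hJ => hJ.2
    have hdep : M.Dep (insert x T) := by
      rw [hTi.insert_dep_iff]; exact ⟨hxclT, hxT⟩
    refine ⟨hzB, insert x T, insert_subset_insert hTB, ⟨hdep, ?_⟩, mem_insert _ _,
      mem_insert_of_mem _ ⟨hzB, hxcl⟩⟩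
    -- minimality
    intro D hD hDdep
    obtain ⟨e, heC, heD⟩ := exists_of_ssubset hD
    have hDsub : D ⊆ insert x T \ {e} :=
      subset_diff_singleton hD.subset heD
    have hind : M.Indep (insert x T \ {e}) := by
      rcases heC with rfl | heT
      · rw [insert_diff_self_of_notMem hxT]
        exact hTi
      · have hex : e ≠ x := fun h => hxT (h ▸ heT)
        have h1 : insert x T \ {e} = insert x (T \ {e}) := by
          rw [insert_diff_of_notMem _ (by simp [hex.symm] : x ∉ ({e} : Set α))]
        rw [h1]
        have hTi' : M.Indep (T \ {e}) := hTi.subset diff_subset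
        have hxT' : x ∉ T \ {e} := fun h => hxT h.1
        rw [hTi'.insert_indep_iff_of_notMem hxT']
        refine ⟨hxE, fun hx => ?_⟩
        exact heT.2 (M.closure_subset_closure
          (diff_subset_diff_left hTB) hx)
    exact (hind.subset hDsub).not_dep hDdep

theorem supp_invariance_exchange {α : Type*} (M : Matroid α) (A B : Set α)
    (hA : M.IsBase A) (hB : M.IsBase B) (hAB : Disjoint A B)
    (a₁ b₁ a₂ b₂ : α) (ha₁ : a₁ ∈ A) (hb₁ : b₁ ∈ B) (ha₂ : a₂ ∈ A) (hb₂ : b₂ ∈ B)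
    (hane : a₂ ≠ a₁) (hbne : b₂ ≠ b₁)
    (hex₁ : M.IsBase (insert b₁ (A \ {a₁}))) (hex₂ : M.IsBase (insert a₁ (B \ {b₁})))
    (h : b₂ ∉ suppOf M B a₁ ∨ b₁ ∉ suppOf M B a₂) :
    b₂ ∈ suppOf M (insert a₁ (B \ {b₁})) a₂ ↔ b₂ ∈ suppOf M B a₂ := by
  set B' : Set α := insert a₁ (B \ {b₁}) with hB'
  have ha₁E : a₁ ∈ M.E := hA.subset_ground ha₁
  have ha₂E : a₂ ∈ M.E := hA.subset_ground ha₂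
  have ha₁B : a₁ ∉ B := fun hmem => (hAB.ne_of_mem ha₁ hmem) rfl
  have ha₂B : a₂ ∉ B := fun hmem => (hAB.ne_of_mem ha₂ hmem) rfl
  have hb₁A : b₁ ∉ A := fun hmem => (hAB.ne_of_mem hmem hb₁) rfl
  have hb₂a₁ : b₂ ≠ a₁ := fun he => ha₁B (he ▸ hb₂)
  have ha₂B' : a₂ ∉ B' := by
    rintro (h1 | h1)
    · exact hane h1
    · exact ha₂B h1.1
  have hb₂B' : b₂ ∈ B' := mem_insert_of_mem _ ⟨hb₂, hbne⟩
  set D : Set α := B \ {b₁, b₂} with hD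
  have hDB : D ⊆ B := diff_subset
  -- rewrite key sets in terms of D
  have hBb₂ : B \ {b₂} = insert b₁ D := by
    rw [hD]
    ext w
    simp only [mem_diff, mem_insert_iff, mem_singleton_iff]
    constructor
    · rintro ⟨hwB, hw⟩
      by_cases hwb : w = b₁
      · exact Or.inl hwb
      · exact Or.inr ⟨hwB, by tauto⟩
    · rintro (rfl | ⟨hwB, hw⟩)
      · exact ⟨hb₁, hbne.symm⟩
      · exact ⟨hwB, fun he => hw (Or.inr he)⟩
  have hBb₁ : B \ {b₁} = insert b₂ D := by
    rw [hD]
    ext w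
    simp only [mem_diff, mem_insert_iff, mem_singleton_iff]
    constructor
    · rintro ⟨hwB, hw⟩
      by_cases hwb : w = b₂
      · exact Or.inl hwb
      · exact Or.inr ⟨hwB, by tauto⟩
    · rintro (rfl | ⟨hwB, hw⟩)
      · exact ⟨hb₂, hbne⟩
      · exact ⟨hwB, fun he => hw (Or.inl he)⟩
  have hB'b₂ : B' \ {b₂} = insert a₁ D := by
    rw [hB', hD]
    ext w
    simp only [mem_diff, mem_insert_iff, mem_singleton_iff]
    constructor
    · rintro ⟨(rfl | ⟨hwB, hw1⟩), hw2⟩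
      · exact Or.inl rfl
      · exact Or.inr ⟨hwB, by tauto⟩
    · rintro (rfl | ⟨hwB, hw⟩)
      · exact ⟨Or.inl rfl, hb₂a₁.symm⟩
      · exact ⟨Or.inr ⟨hwB, fun he => hw (Or.inl he)⟩, fun he => hw (Or.inr he)⟩
  -- basic non-membership facts
  have hDE : D ⊆ M.E := hDB.trans hB.subset_ground
  have hF1 : b₁ ∉ M.closure (insert b₂ D) := by
    rw [← hBb₁]; exact hB.indep.notMem_closure_sdiff_of_mem hb₁
  have hF2 : a₁ ∉ M.closure (insert b₂ D) := by
    rw [← hBb₁]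
    intro hcl
    have : M.Dep (insert a₁ (B \ {b₁})) := by
      rw [(hB.indep.subset diff_subset).insert_dep_iff]
      exact ⟨hcl, fun hmem => ha₁B hmem.1⟩
    exact hex₂.indep.not_dep this
  -- translate the supports into closure conditions
  rw [suppOf_base_eq M hB ha₂E ha₂B, suppOf_base_eq M hex₂ ha₂E ha₂B']
  simp only [mem_setOf_eq, hBb₂, hB'b₂]
  have key : a₂ ∉ M.closure (insert a₁ D) ↔ a₂ ∉ M.closure (insert b₁ D) := by
    rcases h with h | h
    · -- b₂ ∉ supp(B, a₁), i.e. a₁ ∈ closure (B \ {b₂}) = closure (insert b₁ D)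
      rw [suppOf_base_eq M hB ha₁E ha₁B] at h
      simp only [mem_setOf_eq, hBb₂, not_and, not_not] at h
      have ha₁cl : a₁ ∈ M.closure (insert b₁ D) := h hb₂
      constructor
      · intro h2 h3
        by_cases hDcl : a₂ ∈ M.closure D
        · exact h2 (M.closure_subset_closure (subset_insert _ _) hDcl)
        · have ha₁D : a₁ ∉ M.closure D :=
            fun hx => hF2 (M.closure_subset_closure (subset_insert _ _) hx)
          have hb₁cl : b₁ ∈ M.closure (insert a₂ D) :=
            Matroid.mem_closure_insert hDcl h3
          have ha₁cl2 : a₁ ∈ M.closure (insert a₂ D) := by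
            have h4 : M.closure (insert b₁ (insert a₂ D)) = M.closure (insert a₂ D) :=
              Matroid.closure_insert_eq_of_mem_closure hb₁cl
            exact h4 ▸ (M.closure_subset_closure
              (insert_subset_insert (subset_insert _ _)) ha₁cl)
          exact h2 (Matroid.mem_closure_insert ha₁D ha₁cl2)
      · intro h2 h3
        have h4 : M.closure (insert a₁ (insert b₁ D)) = M.closure (insert b₁ D) :=
          Matroid.closure_insert_eq_of_mem_closure ha₁cl
        exact h2 (h4 ▸ (M.closure_subset_closure
          (insert_subset_insert (subset_insert _ _)) h3))
    · -- b₁ ∉ supp(B, a₂), i.e. a₂ ∈ closure (B \ {b₁}) = closure (insert b₂ D)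
      rw [suppOf_base_eq M hB ha₂E ha₂B] at h
      simp only [mem_setOf_eq, hBb₁, not_and, not_not] at h
      have ha₂cl : a₂ ∈ M.closure (insert b₂ D) := h hb₁
      by_cases hDcl : a₂ ∈ M.closure D
      · constructor <;> intro h2 <;>
          exact absurd (M.closure_subset_closure (subset_insert _ _) hDcl) h2
      · have hb₂cl : b₂ ∈ M.closure (insert a₂ D) :=
          Matroid.mem_closure_insert hDcl ha₂cl
        have hcl2 : M.closure (insert a₂ (insert b₂ D)) = M.closure (insert b₂ D) :=
          Matroid.closure_insert_eq_of_mem_closure ha₂cl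
        constructor
        · intro _ h3
          have hb₁cl : b₁ ∈ M.closure (insert a₂ D) :=
            Matroid.mem_closure_insert hDcl h3
          have : b₁ ∈ M.closure (insert b₂ D) :=
            hcl2 ▸ (M.closure_subset_closure
              (insert_subset_insert (subset_insert _ _)) hb₁cl)
          exact absurd this hF1
        · intro _ h3
          have ha₁cl : a₁ ∈ M.closure (insert a₂ D) :=
            Matroid.mem_closure_insert hDcl h3
          have : a₁ ∈ M.closure (insert b₂ D) :=
            hcl2 ▸ (M.closure_subset_closure
              (insert_subset_insert (subset_insert _ _)) ha₁cl)
          exact absurd this hF2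
  constructor
  · rintro ⟨_, h2⟩
    exact ⟨hb₂, (not_iff_not.2 (Iff.of_eq rfl)).1 (key.1 h2)⟩
  · rintro ⟨_, h2⟩
    exact ⟨hb₂B', key.2 h2⟩
end

section
/- Let A and B be disjoint bases of a matroid M, and suppose X = {a₁,...,a_m} ⊆ A and Y = {b₁,...,b_m} ⊆ B are ordered so that for each i, B_i' = (B \ {b₁,...,bᵢ}) ∪ {a₁,...,aᵢ} is a base (a serial exchange relative to B). Then for each k = 1,...,m, the union over i = 1,...,k of C(B,aᵢ) equals the union over i = 1,...,k of C((B \ {b₁,...,b_{i-1}}) ∪ {a₁,...,a_{i-1}}, aᵢ) ∩ B. -/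
open Set Matroid

/-- Fundamental circuit existence. -/
lemma exists_isCircuitOf {α : Type*} {M : Matroid α} {J : Set α} {x : α}
    (hJ : M.Indep J) (hx : x ∈ M.E) (hxJ : x ∉ J) (hdep : M.Dep (insert x J)) :
    ∃ C ⊆ insert x J, IsCircuitOf M C ∧ x ∈ C := by
  set K := {y ∈ J | x ∉ M.closure (J \ {y})} with hKdef
  have hKJ : K ⊆ J := sep_subset _ _
  have hsub : insert x K ⊆ insert x J := insert_subset_insert hKJ
  have hE : insert x J ⊆ M.E := hdep.subset_ground
  refine ⟨insert x K, hsub, ⟨?_, ?_⟩, mem_insert _ _⟩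
  · -- dependent
    rw [← not_indep_iff (hsub.trans hE)]
    intro hind
    obtain ⟨J', hJ', hsub'⟩ := hind.subset_isBasis_of_subset hsub hE
    have hne : ∃ y, y ∈ insert x J ∧ y ∉ J' := by
      by_contra h
      push_neg at h
      have : J' = insert x J := hJ'.subset.antisymm h
      exact hdep.not_indep (this ▸ hJ'.indep)
    obtain ⟨y, hy, hyJ'⟩ := hne
    have hyx : y ≠ x := fun h => hyJ' (hsub' (h ▸ mem_insert _ _))
    have hyJ : y ∈ J := hy.resolve_left hyx
    have hyK : y ∉ K := fun h => hyJ' (hsub' (mem_insert_of_mem _ h))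
    have hxcl : x ∈ M.closure (J \ {y}) := by
      by_contra h; exact hyK ⟨hyJ, h⟩
    have hJ'sub : J' ⊆ insert x (J \ {y}) := by
      intro z hz
      rcases hJ'.subset hz with rfl | hzJ
      · exact mem_insert _ _
      · exact mem_insert_of_mem _ ⟨hzJ, fun h => hyJ' (h ▸ hz)⟩
    have hycl : y ∈ M.closure J' := hJ'.subset_closure hy
    have : y ∈ M.closure (J \ {y}) := by
      have h1 : y ∈ M.closure (insert x (J \ {y})) :=
        M.closure_subset_closure hJ'sub hycl
      rwa [closure_insert_eq_of_mem_closure hxcl] at h1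
    exact hJ.notMem_closure_sdiff_of_mem hyJ this
  · -- minimal
    intro D hD
    by_cases hxD : x ∈ D
    · obtain ⟨y, hyK', hyD⟩ := not_subset.mp hD.2
      have hyx : y ≠ x := fun h => hyD (h ▸ hxD)
      have hyK : y ∈ K := hyK'.resolve_left hyx
      have hins : M.Indep (insert x (J \ {y})) := by
        rw [(hJ.sdiff _).insert_indep_iff_of_notMem (fun h => hxJ h.1)]
        exact ⟨hx, hyK.2⟩
      refine (hins.subset ?_).not_dep
      intro z hz
      rcases hD.1 hz with rfl | hzK
      · exact mem_insert _ _
      · exact mem_insert_of_mem _ ⟨hKJ hzK, fun h => hyD (h ▸ hz)⟩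
    · refine (hJ.subset ?_).not_dep
      intro z hz
      rcases hD.1 hz with rfl | hzK
      · exact absurd hz hxD
      · exact hKJ hzK

/-- Characterization of the support of `x` in a base `I`. -/
lemma mem_suppOf_iff {α : Type*} {M : Matroid α} {I : Set α} (hI : M.IsBase I)
    {x : α} (hx : x ∈ M.E) (hxI : x ∉ I) {y : α} :
    y ∈ suppOf M I x ↔ y ∈ I ∧ M.Indep (insert x (I \ {y})) := by
  constructor
  · rintro ⟨hyI, C, hCsub, ⟨hCdep, hCmin⟩, hxC, hyC⟩
    refine ⟨hyI, ?_⟩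
    by_contra hnind
    have hsubE : insert x (I \ {y}) ⊆ M.E :=
      insert_subset hx (diff_subset.trans hI.subset_ground)
    have hdep : M.Dep (insert x (I \ {y})) := (not_indep_iff hsubE).mp hnind
    have hxcl : x ∈ M.closure (I \ {y}) :=
      ((hI.indep.sdiff _).mem_closure_iff_of_notMem (fun h => hxI h.1)).mpr hdep
    have hCy : C \ {y} ⊂ C := ⟨diff_subset, fun h => (h hyC).2 rfl⟩
    have hCyind : M.Indep (C \ {y}) :=
      (not_dep_iff (diff_subset.trans hCdep.subset_ground)).mp (hCmin _ hCy)
    have hycl : y ∈ M.closure (C \ {y}) := by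
      have hd : M.Dep (insert y (C \ {y})) := by
        rwa [insert_diff_singleton, insert_eq_of_mem hyC]
      exact (hCyind.insert_dep_iff.mp hd).1
    have hsub2 : C \ {y} ⊆ M.closure (I \ {y}) := by
      rintro z ⟨hzC, hzy⟩
      rcases hCsub hzC with rfl | hzI
      · exact hxcl
      · exact M.subset_closure _ (diff_subset.trans hI.subset_ground) ⟨hzI, hzy⟩
    exact hI.indep.notMem_closure_sdiff_of_mem hyI
      (closure_subset_closure_of_subset_closure hsub2 hycl)
  · rintro ⟨hyI, hind⟩
    have hdep : M.Dep (insert x I) := hI.insert_dep ⟨hx, hxI⟩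
    obtain ⟨C, hCsub, hC, hxC⟩ := exists_isCircuitOf hI.indep hx hxI hdep
    refine ⟨hyI, C, hCsub, hC, hxC, ?_⟩
    by_contra hyC
    refine (hind.subset ?_).not_dep hC.1
    intro z hz
    rcases hCsub hz with rfl | hzI
    · exact mem_insert _ _
    · exact mem_insert_of_mem _ ⟨hzI, fun h => hyC (h ▸ hz)⟩

theorem serial_exchange_supp_union {α : Type*} (M : Matroid α) (A B : Set α)
    (hA : M.IsBase A) (hB : M.IsBase B) (hAB : Disjoint A B)
    (m : ℕ) (a b : Fin m → α)
    (hainj : Function.Injective a) (hbinj : Function.Injective b)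
    (haA : ∀ i, a i ∈ A) (hbB : ∀ i, b i ∈ B)
    (hser : ∀ i : Fin m,
      M.IsBase ((B \ (b '' {j | j ≤ i})) ∪ (a '' {j | j ≤ i}))) :
    ∀ k : Fin m,
      (⋃ i ∈ {i : Fin m | i ≤ k}, suppOf M B (a i)) =
        ⋃ i ∈ {i : Fin m | i ≤ k},
          (suppOf M ((B \ (b '' {j | j < i})) ∪ (a '' {j | j < i})) (a i)) ∩ B := by
  intro k
  have hBE : B ⊆ M.E := hB.subset_ground
  have haE : ∀ i, a i ∈ M.E := fun i => hA.subset_ground (haA i)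
  have haB : ∀ i, a i ∉ B := fun i h => disjoint_left.mp hAB (haA i) h
  -- each intermediate set is a base
  have hbase : ∀ i : Fin m, M.IsBase ((B \ (b '' {j | j < i})) ∪ (a '' {j | j < i})) := by
    intro i
    rcases Nat.eq_zero_or_pos i.val with h0 | hpos
    · have he : {j : Fin m | j < i} = ∅ := by
        ext j; simp [Fin.lt_def, h0]
      rw [he]
      simpa using hB
    · set p : Fin m := ⟨i.val - 1, lt_of_le_of_lt (Nat.sub_le i.val 1) i.isLt⟩ with hp
      have hset : {j : Fin m | j < i} = {j | j ≤ p} := by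
        ext j
        simp only [mem_setOf_eq, Fin.lt_def, Fin.le_def]
        have hpv : (p : ℕ) = i.val - 1 := rfl
        omega
      rw [hset]
      exact hser p
  have hanB : ∀ i : Fin m, a i ∉ (B \ (b '' {j | j < i})) ∪ (a '' {j | j < i}) := by
    rintro i (⟨hiB, -⟩ | ⟨l, hl, he⟩)
    · exact haB i hiB
    · exact absurd (hainj he) (ne_of_lt hl)
  ext y
  simp only [mem_iUnion, mem_setOf_eq, exists_prop, mem_inter_iff]
  have hkey : ∀ s : Set (Fin m), (∀ l ∈ s, a l ∈ M.closure (B \ {y})) →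
      ((B \ (b '' s)) ∪ (a '' s)) \ {y} ⊆ M.closure (B \ {y}) := by
    rintro s hs z ⟨hz, hzy⟩
    rcases hz with ⟨hzB, -⟩ | ⟨l, hl, rfl⟩
    · exact M.subset_closure _ (diff_subset.trans hBE) ⟨hzB, hzy⟩
    · exact hs l hl
  constructor
  · rintro ⟨i, hik, hyi⟩
    have hyB : y ∈ B := hyi.1
    obtain ⟨j, hjS, hjmin⟩ := (wellFounded_lt (α := Fin m)).has_min
      {j : Fin m | y ∈ suppOf M B (a j)} ⟨i, hyi⟩
    have hji : j ≤ i := not_lt.mp (fun h => hjmin i hyi h)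
    have hjk : j ≤ k := hji.trans hik
    have hcl : ∀ l : Fin m, l < j → a l ∈ M.closure (B \ {y}) := by
      intro l hl
      have h1 : y ∉ suppOf M B (a l) := fun h => hjmin l h hl
      rw [mem_suppOf_iff hB (haE l) (haB l)] at h1
      push_neg at h1
      have hd : M.Dep (insert (a l) (B \ {y})) :=
        (Matroid.not_indep_iff (insert_subset (haE l) (diff_subset.trans hBE))).mp (h1 hyB)
      exact ((hB.indep.sdiff _).insert_dep_iff.mp hd).1
    have hynb : y ∉ b '' {l : Fin m | l < j} := by
      rintro ⟨l, hl, rfl⟩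
      have hB' := hser l
      have hsubcl : (B \ (b '' {l' | l' ≤ l})) ∪ (a '' {l' | l' ≤ l})
          ⊆ M.closure (B \ {b l}) := by
        intro z hz
        have hzy : z ≠ b l := by
          rintro rfl
          rcases hz with ⟨-, hzb⟩ | hza
          · exact hzb ⟨l, le_refl l, rfl⟩
          · obtain ⟨l', -, he⟩ := hza
            exact haB l' (he ▸ hbB l)
        exact hkey _ (fun l' hl' => hcl l' (lt_of_le_of_lt hl' hl)) ⟨hz, hzy⟩
      have hEcl : M.E ⊆ M.closure (B \ {b l}) := by
        rw [← hB'.closure_eq]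
        exact closure_subset_closure_of_subset_closure hsubcl
      exact hB.indep.notMem_closure_sdiff_of_mem hyB (hEcl (hBE hyB))
    refine ⟨j, hjk, ?_, hyB⟩
    rw [mem_suppOf_iff (hbase j) (haE j) (hanB j)]
    refine ⟨Or.inl ⟨hyB, hynb⟩, ?_⟩
    by_contra hnind
    have hd : M.Dep (insert (a j)
        (((B \ (b '' {l | l < j})) ∪ (a '' {l | l < j})) \ {y})) :=
      (Matroid.not_indep_iff (insert_subset (haE j)
        (diff_subset.trans (hbase j).subset_ground))).mp hnind
    have hajcl : a j ∈ M.closure (B \ {y}) :=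
      closure_subset_closure_of_subset_closure (hkey _ (fun l hl => hcl l hl))
        ((((hbase j).indep.sdiff _).insert_dep_iff.mp hd).1)
    have h2 := (mem_suppOf_iff hB (haE j) (haB j)).mp hjS
    have hd2 : M.Dep (insert (a j) (B \ {y})) :=
      (hB.indep.sdiff _).insert_dep_iff.mpr ⟨hajcl, fun h => haB j h.1⟩
    exact hd2.not_indep h2.2
  · rintro ⟨i, hik, hyi, hyB⟩
    by_contra hcon
    push_neg at hcon
    have hcl : ∀ l : Fin m, l ≤ k → a l ∈ M.closure (B \ {y}) := by
      intro l hl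
      have h1 := hcon l hl
      rw [mem_suppOf_iff hB (haE l) (haB l)] at h1
      push_neg at h1
      have hd : M.Dep (insert (a l) (B \ {y})) :=
        (Matroid.not_indep_iff (insert_subset (haE l) (diff_subset.trans hBE))).mp (h1 hyB)
      exact ((hB.indep.sdiff _).insert_dep_iff.mp hd).1
    have h2 := (mem_suppOf_iff (hbase i) (haE i) (hanB i)).mp hyi
    have hbase' : M.IsBase (insert (a i)
        (((B \ (b '' {l | l < i})) ∪ (a '' {l | l < i})) \ {y})) :=
      (hbase i).exchange_isBase_of_indep (hanB i) h2.2
    have hsub : insert (a i) (((B \ (b '' {l | l < i})) ∪ (a '' {l | l < i})) \ {y})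
        ⊆ M.closure (B \ {y}) :=
      insert_subset (hcl i hik)
        (hkey _ (fun l hl => hcl l (le_of_lt (lt_of_lt_of_le hl hik))))
    have hEcl : M.E ⊆ M.closure (B \ {y}) := by
      rw [← hbase'.closure_eq]
      exact closure_subset_closure_of_subset_closure hsub
    exact hB.indep.notMem_closure_sdiff_of_mem hyB (hEcl (hBE hyB))
end

section
/- Let A and B be two disjoint bases of a matroid M with rank at least 2, and suppose every element of A is symmetrically exchangeable with a fixed element b ∈ B relative to A and B. Then for any b' ∈ B with b' ≠ b there exists a' ∈ A such that (a',b') is a symmetric exchange relative to A and B, and in particular there exist two disjoint symmetric exchanges relative to A and B. -/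
open Set

/-- If `x` lies in the closure of `I \ S` and of `I \ {a}`, with `I` independent,
then `x` lies in the closure of `I \ insert a S`. -/
lemma mem_closure_diff_insert {α : Type*} {M : Matroid α} {I S : Set α} {x a : α}
    (hI : M.Indep I) (haS : a ∉ S)
    (h1 : x ∈ M.closure (I \ S)) (h2 : x ∈ M.closure (I \ {a})) :
    x ∈ M.closure (I \ insert a S) := by
  by_cases haI : a ∈ I
  · set K := I \ insert a S with hK
    by_contra hxK
    have hIS : I \ S = insert a K := by
      ext y
      simp only [hK, mem_diff, mem_insert_iff]
      constructor
      · rintro ⟨hyI, hyS⟩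
        by_cases hya : y = a
        · exact Or.inl hya
        · exact Or.inr ⟨hyI, by simp [hya, hyS]⟩
      · rintro (rfl | ⟨hyI, hy⟩)
        · exact ⟨haI, haS⟩
        · exact ⟨hyI, fun hyS => hy (Or.inr hyS)⟩
    rw [hIS] at h1
    have hex := Matroid.closure_exchange (M := M) (e := x) (f := a) (X := K) ⟨h1, hxK⟩
    have hKsub : insert x K ⊆ M.closure (I \ {a}) := by
      refine insert_subset h2 ?_
      refine (subset_trans ?_ (M.subset_closure (I \ {a})
        ((diff_subset).trans hI.subset_ground)))
      intro y hy
      exact ⟨hy.1, fun h => hy.2 (h ▸ Or.inl rfl)⟩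
    have : a ∈ M.closure (I \ {a}) :=
      (Matroid.closure_subset_closure_of_subset_closure hKsub) hex.1
    exact hI.notMem_closure_diff_of_mem haI this
  · have heq : I \ insert a S = I \ S := by
      ext y; simp only [mem_diff, mem_insert_iff]
      constructor
      · rintro ⟨hyI, hy⟩; exact ⟨hyI, fun h => hy (Or.inr h)⟩
      · rintro ⟨hyI, hy⟩
        refine ⟨hyI, ?_⟩
        rintro (rfl | h)
        · exact haI hyI
        · exact hy h
    rw [heq]; exact h1

lemma mem_closure_diff_of_forall {α : Type*} {M : Matroid α} {I : Set α} {x : α}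
    (hI : M.Indep I) (T : Set α) (hT : T.Finite) (hx : x ∈ M.closure I)
    (h : ∀ a ∈ T, x ∈ M.closure (I \ {a})) : x ∈ M.closure (I \ T) := by
  refine Set.Finite.induction_on
    (motive := fun T _ => (∀ a ∈ T, x ∈ M.closure (I \ {a})) → x ∈ M.closure (I \ T))
    T hT (fun _ => by simpa using hx) ?_ h
  intro a S haS _ ih h'
  exact mem_closure_diff_insert hI haS
    (ih fun c hc => h' c (Or.inr hc)) (h' a (Or.inl rfl))

/-- Symmetric exchange, under the given finiteness assumption. -/
lemma symmetric_exchange_aux {α : Type*} {M : Matroid α} {A B : Set α}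
    (hA : M.IsBase A) (hB : M.IsBase B) (hAB : Disjoint A B) (hAfin : A.Finite)
    {b' : α} (hb' : b' ∈ B) :
    ∃ a' ∈ A, M.IsBase (insert b' (A \ {a'})) ∧ M.IsBase (insert a' (B \ {b'})) := by
  have hb'E : b' ∈ M.E := hB.subset_ground hb'
  have hb'A : b' ∉ A := fun h => (hAB.ne_of_mem h hb') rfl
  have hBd : M.Indep (B \ {b'}) := hB.indep.subset diff_subset
  have hb'ncl : b' ∉ M.closure (B \ {b'}) := hB.indep.notMem_closure_diff_of_mem hb'
  -- Find `a' ∈ A` with `a' ∉ cl (B \ {b'})` and `b' ∉ cl (A \ {a'})`.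
  have key : ∃ a' ∈ A, a' ∉ M.closure (B \ {b'}) ∧ b' ∉ M.closure (A \ {a'}) := by
    by_contra hcon
    push_neg at hcon
    set T := {a ∈ A | b' ∈ M.closure (A \ {a})} with hT
    have hmem : b' ∈ M.closure (A \ T) := by
      refine mem_closure_diff_of_forall hA.indep T (hAfin.subset (sep_subset _ _))
        (by rw [hA.closure_eq]; exact hb'E) (fun a ha => ha.2)
    have hsub : A \ T ⊆ M.closure (B \ {b'}) := by
      intro a ha
      rcases em (a ∈ M.closure (B \ {b'})) with h | h
      · exact h
      · exact absurd ⟨ha.1, hcon a ha.1 h⟩ ha.2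
    exact hb'ncl ((Matroid.closure_subset_closure_of_subset_closure hsub) hmem)
  obtain ⟨a', ha'A, ha'1, ha'2⟩ := key
  have ha'E : a' ∈ M.E := hA.subset_ground ha'A
  have ha'B : a' ∉ B := fun h => (hAB.ne_of_mem ha'A h) rfl
  refine ⟨a', ha'A, ?_, ?_⟩
  · refine hA.exchange_isBase_of_indep hb'A ?_
    have hAd : M.Indep (A \ {a'}) := hA.indep.subset diff_subset
    rw [hAd.insert_indep_iff_of_notMem (fun h => hb'A h.1)]
    exact ⟨hb'E, ha'2⟩
  · refine hB.exchange_isBase_of_indep ha'B ?_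
    rw [hBd.insert_indep_iff_of_notMem (fun h => ha'B h.1)]
    exact ⟨ha'E, ha'1⟩

theorem all_exchange_with_fixed_element {α : Type*} (M : Matroid α) (A B : Set α)
    (hA : M.IsBase A) (hB : M.IsBase B) (hAB : Disjoint A B)
    (hrk : 2 ≤ A.ncard) (b : α) (hb : b ∈ B)
    (hall : ∀ a ∈ A, M.IsBase (insert b (A \ {a})) ∧ M.IsBase (insert a (B \ {b}))) :
    (∀ b' ∈ B, b' ≠ b → ∃ a' ∈ A,
        M.IsBase (insert b' (A \ {a'})) ∧ M.IsBase (insert a' (B \ {b'}))) ∧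
      ∃ a₁ ∈ A, ∃ a₂ ∈ A, ∃ b₁ ∈ B, ∃ b₂ ∈ B, a₁ ≠ a₂ ∧ b₁ ≠ b₂ ∧
        M.IsBase (insert b₁ (A \ {a₁})) ∧ M.IsBase (insert a₁ (B \ {b₁})) ∧
        M.IsBase (insert b₂ (A \ {a₂})) ∧ M.IsBase (insert a₂ (B \ {b₂})) := by
  have hAfin : A.Finite := by
    by_contra h
    rw [Set.Infinite.ncard h] at hrk; omega
  have hpart1 : ∀ b' ∈ B, b' ≠ b → ∃ a' ∈ A,
      M.IsBase (insert b' (A \ {a'})) ∧ M.IsBase (insert a' (B \ {b'})) :=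
    fun b' hb' _ => symmetric_exchange_aux hA hB hAB hAfin hb'
  refine ⟨hpart1, ?_⟩
  have hBcard : 1 < B.ncard := by
    rw [hB.ncard_eq_ncard_of_isBase hA]; omega
  obtain ⟨b', hb'B, hb'b⟩ := Set.exists_ne_of_one_lt_ncard hBcard b
  obtain ⟨a', ha'A, hba1, hba2⟩ := hpart1 b' hb'B hb'b
  obtain ⟨a₂, ha₂A, ha₂a'⟩ := Set.exists_ne_of_one_lt_ncard (by omega : 1 < A.ncard) a'
  obtain ⟨h1, h2⟩ := hall a₂ ha₂A
  exact ⟨a', ha'A, a₂, ha₂A, b', hb'B, b, hb, fun h => ha₂a' h.symm, hb'b,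
    hba1, hba2, h1, h2⟩
end

section
/- Let A and B be disjoint bases of a matroid, let a ∈ A, b ∈ B be symmetrically exchangeable, and set A' = A - a + b, B' = B - b + a. Let a₂ ∈ A, a₂ ≠ a. If a₂ is not symmetrically exchangeable relative to A' and B' with any element of B - b, then a₂ and a are symmetrically exchangeable relative to A' and B'; that is, a₂ ∈ C(A',a) and a ∈ C(B',a₂). -/
open Set

/-- The "kernel" of the fundamental circuit of `e` with respect to `I`. -/
def fundK {α : Type*} (M : Matroid α) (I : Set α) (e : α) : Set α :=
  ⋂₀ {J | J ⊆ I ∧ e ∈ M.closure J}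

section fundK

variable {α : Type*} {M : Matroid α} {I : Set α} {e : α}

lemma fundK_subset (hecl : e ∈ M.closure I) : fundK M I e ⊆ I :=
  sInter_subset_of_mem ⟨Subset.rfl, hecl⟩

lemma mem_closure_fundK (hI : M.Indep I) (hecl : e ∈ M.closure I) :
    e ∈ M.closure (fundK M I e) := by
  have hne : {J | J ⊆ I ∧ e ∈ M.closure J}.Nonempty := ⟨I, Subset.rfl, hecl⟩
  rw [fundK, hI.closure_sInter_eq_biInter_closure_of_forall_subset hne (fun J hJ => hJ.1)]
  exact mem_iInter₂.mpr fun J hJ => hJ.2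

lemma isCircuitOf_fundK (hI : M.Indep I) (heI : e ∉ I) (hecl : e ∈ M.closure I) :
    IsCircuitOf M (insert e (fundK M I e)) := by
  have hKI : fundK M I e ⊆ I := fundK_subset hecl
  have hKind : M.Indep (fundK M I e) := hI.subset hKI
  have heK : e ∉ fundK M I e := fun h => heI (hKI h)
  constructor
  · rw [hKind.insert_dep_iff]
    exact ⟨mem_closure_fundK hI hecl, heK⟩
  · intro D hD hDdep
    by_cases heD : e ∈ D
    · set D' := D \ {e} with hD'
      have hD'K : D' ⊆ fundK M I e := by
        intro x hx
        rcases hD.1 hx.1 with rfl | h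
        · exact absurd rfl hx.2
        · exact h
      obtain ⟨x, hxK, hxD⟩ : ∃ x, x ∈ insert e (fundK M I e) ∧ x ∉ D :=
        exists_of_ssubset hD
      have hxK' : x ∈ fundK M I e := by
        rcases hxK with rfl | h
        · exact absurd heD hxD
        · exact h
      have hD'ind : M.Indep D' := hKind.subset hD'K
      have hDeq : D = insert e D' := by
        rw [hD']; rw [insert_diff_singleton, insert_eq_self.2 heD]
      rw [hDeq, hD'ind.insert_dep_iff] at hDdep
      have hmem : fundK M I e ⊆ D' :=
        sInter_subset_of_mem ⟨hD'K.trans hKI, hDdep.1⟩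
      exact hxD (hDeq ▸ mem_insert_of_mem e (hmem hxK'))
    · have : D ⊆ fundK M I e := fun x hx => by
        rcases hD.1 hx with rfl | h
        · exact absurd hx heD
        · exact h
      exact hDdep.not_indep (hKind.subset this)

end fundK

theorem exchange_with_a_of_no_exchange_in_B {α : Type*} (M : Matroid α) (A B : Set α)
    (hA : M.IsBase A) (hB : M.IsBase B) (hAB : Disjoint A B)
    (a b : α) (ha : a ∈ A) (hb : b ∈ B)
    (hex : M.IsBase (insert b (A \ {a})) ∧ M.IsBase (insert a (B \ {b})))
    (a₂ : α) (ha₂ : a₂ ∈ A) (hne : a₂ ≠ a)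
    (hno : ¬ ∃ y ∈ B \ {b},
      M.IsBase (insert y ((insert b (A \ {a})) \ {a₂})) ∧
      M.IsBase (insert a₂ ((insert a (B \ {b})) \ {y}))) :
    (M.IsBase (insert a ((insert b (A \ {a})) \ {a₂})) ∧
        M.IsBase (insert a₂ ((insert a (B \ {b})) \ {a}))) ∧
      a₂ ∈ suppOf M (insert b (A \ {a})) a ∧
      a ∈ suppOf M (insert a (B \ {b})) a₂ := by
  obtain ⟨hA', hB'⟩ := hex
  set A' := insert b (A \ {a}) with hA'def
  set B' := insert a (B \ {b}) with hB'def
  have hab : a ≠ b := fun h => (hAB.ne_of_mem ha hb) h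
  have haA' : a ∉ A' := by
    rintro (h | h)
    · exact hab h
    · exact h.2 rfl
  have ha₂A' : a₂ ∈ A' := mem_insert_of_mem b ⟨ha₂, hne⟩
  have ha₂B' : a₂ ∉ B' := by
    rintro (h | h)
    · exact hne h
    · exact disjoint_left.mp hAB ha₂ h.1
  have haE : a ∈ M.E := hA.subset_ground ha
  have ha₂E : a₂ ∈ M.E := hA.subset_ground ha₂
  have ha₂cl : a₂ ∈ M.closure B' := by rw [hB'.closure_eq]; exact ha₂E
  -- the fundamental circuit of a₂ with respect to B'
  set K := fundK M B' a₂ with hKdef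
  have hKB' : K ⊆ B' := fundK_subset ha₂cl
  have ha₂K : a₂ ∈ M.closure K := mem_closure_fundK hB'.indep ha₂cl
  have hCirc : IsCircuitOf M (insert a₂ K) := isCircuitOf_fundK hB'.indep ha₂B' ha₂cl
  -- find y ∈ K not in the closure of A' \ {a₂}
  have hA'd : M.Indep (A' \ {a₂}) := hA'.indep.subset diff_subset
  obtain ⟨y, hyK, hycl⟩ : ∃ y ∈ K, y ∉ M.closure (A' \ {a₂}) := by
    by_contra h
    push_neg at h
    have hsub : M.closure K ⊆ M.closure (A' \ {a₂}) := by
      have h1 : K ⊆ M.closure (A' \ {a₂}) := h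
      calc M.closure K ⊆ M.closure (M.closure (A' \ {a₂})) := M.closure_subset_closure h1
        _ = M.closure (A' \ {a₂}) := M.closure_closure _
    exact hA'.indep.notMem_closure_sdiff_of_mem ha₂A' (hsub ha₂K)
  -- y gives a symmetric exchange
  have hyB' : y ∈ B' := hKB' hyK
  have hyA' : y ∉ A' := by
    intro hy
    have : y ∈ A' \ {a₂} := ⟨hy, fun h => ha₂B' (h ▸ hyB')⟩
    exact hycl (M.mem_closure_of_mem this hA'd.subset_ground)
  have hyE : y ∈ M.E := hB'.subset_ground hyB'
  have hbase1 : M.IsBase (insert y (A' \ {a₂})) := by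
    refine hA'.exchange_isBase_of_indep hyA' ?_
    rw [hA'd.insert_indep_iff_of_notMem (fun h => hycl (M.mem_closure_of_mem h hA'd.subset_ground))]
    exact ⟨hyE, hycl⟩
  have ha₂clB'y : a₂ ∉ M.closure (B' \ {y}) := by
    intro h
    have : K ⊆ B' \ {y} := sInter_subset_of_mem ⟨diff_subset, h⟩
    exact (this hyK).2 rfl
  have hB'y : M.Indep (B' \ {y}) := hB'.indep.subset diff_subset
  have hbase2 : M.IsBase (insert a₂ (B' \ {y})) := by
    refine hB'.exchange_isBase_of_indep ha₂B' ?_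
    rw [hB'y.insert_indep_iff_of_notMem
      (fun h => ha₂B' (diff_subset h))]
    exact ⟨ha₂E, ha₂clB'y⟩
  -- by hno, y must equal a
  have hya : y = a := by
    by_contra hya
    rcases hyB' with rfl | hy
    · exact hya rfl
    · exact hno ⟨y, hy, hbase1, hbase2⟩
  rw [hya] at hbase1 hbase2 hyB' hyK
  refine ⟨⟨hbase1, hbase2⟩, ?_, ?_⟩
  · -- a₂ ∈ suppOf M A' a, using the fundamental circuit of a w.r.t. A'
    have hacl : a ∈ M.closure A' := by rw [hA'.closure_eq]; exact haE
    refine ⟨ha₂A', insert a (fundK M A' a), ?_, isCircuitOf_fundK hA'.indep haA' hacl,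
      mem_insert a _, ?_⟩
    · exact insert_subset_insert (fundK_subset hacl)
    · refine mem_insert_of_mem a ?_
      rw [fundK, mem_sInter]
      rintro J ⟨hJA', haJ⟩
      by_contra ha₂J
      have hJsub : J ⊆ A' \ {a₂} := fun x hx => ⟨hJA' hx, fun h => ha₂J (h ▸ hx)⟩
      have : a ∈ M.closure (A' \ {a₂}) := M.closure_subset_closure hJsub haJ
      have haA'd : a ∉ A' \ {a₂} := fun h => haA' h.1
      have := hbase1.indep.notMem_closure_sdiff_of_mem (mem_insert a _)
      rw [insert_diff_self_of_notMem haA'd] at this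
      exact this (M.closure_subset_closure hJsub haJ)
  · -- a ∈ suppOf M B' a₂, using the circuit insert a₂ K
    exact ⟨hyB', insert a₂ K, insert_subset_insert hKB', hCirc, mem_insert a₂ _,
      mem_insert_of_mem a₂ hyK⟩
end
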